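/- arXiv:2108.12464 — 3 statements merged into one kernel-verified Lean document; each statement's English description precedes it below -/
import Mathlib

section
/- Suppose 3n points lying on the lines y=0, y=1, y=2 (with n points on each line, having x-coordinate multisets A, B, C respectively with ΣA + ΣB = 2·ΣC) are partitioned into n y-monotone angles, each being either straight or left-facing. Then every angle in the partition is a straight angle. -/
theorem angle_partition_all_straight (n : ℕ) (a b c : Fin n → ℝ)
    (hsum : (∑ i, a i) + (∑ i, b i) = 2 * ∑ i, c i)
    (σ τ : Equiv.Perm (Fin n))
    -- the i-th angle has points (a i, 0), (c (σ i), 1), (b (τ i), 2) and is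
    -- straight or left-facing, i.e. x(q) ≤ (x(p) + x(r)) / 2
    (hangles : ∀ i, c (σ i) ≤ (a i + b (τ i)) / 2) :
    ∀ i, c (σ i) = (a i + b (τ i)) / 2 := by
  have hsum' : ∑ i, c (σ i) = ∑ i, (a i + b (τ i)) / 2 := by
    rw [Equiv.sum_comp σ c]
    rw [show ∑ i, (a i + b (τ i)) / 2 = ((∑ i, a i) + ∑ i, b (τ i)) / 2 by
      rw [← Finset.sum_div, Finset.sum_add_distrib]]
    rw [Equiv.sum_comp τ b]
    linarith
  have := (Finset.sum_eq_sum_iff_of_le (fun i _ => hangles i)).mp hsum'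
  exact fun i => this i (Finset.mem_univ i)
end

section
/- An instance of Distinct Numerical Matching with Target Sums (DNMTS) with sets A, B, C of n distinct positive integers satisfying ΣA + ΣB = ΣC has a solution if and only if the corresponding Angle Partition instance (points (a,0) for a ∈ A, (b,2) for b ∈ B, (c/2,1) for c ∈ C) can be partitioned into n y-monotone angles none of which is right-facing. -/
theorem dnmts_iff_anglePartition (n : ℕ) (a b c : Fin n → ℤ)
    (ha : Function.Injective a) (hb : Function.Injective b) (hc : Function.Injective c)
    (hapos : ∀ i, 0 < a i) (hbpos : ∀ i, 0 < b i) (hcpos : ∀ i, 0 < c i)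
    (hsum : (∑ i, a i) + (∑ i, b i) = ∑ i, c i) :
    -- DNMTS has a solution: `n` disjoint triples `(a i, b (σ i), c (τ i))` with
    -- `a i + b (σ i) = c (τ i)`
    (∃ σ τ : Equiv.Perm (Fin n), ∀ i, a i + b (σ i) = c (τ i)) ↔
    -- the point set { (a i, 0) } ∪ { (b i, 2) } ∪ { (c i / 2, 1) } can be partitioned
    -- into `n` y-monotone angles (one point of each line per angle), none right-facing:
    -- the middle point q = (c (τ i) / 2, 1) satisfies x(q) ≤ (x(p) + x(r)) / 2
    (∃ σ τ : Equiv.Perm (Fin n), ∀ i,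
      ((c (τ i) : ℝ)) / 2 ≤ ((a i : ℝ) + (b (σ i) : ℝ)) / 2) := by
  constructor
  · rintro ⟨σ, τ, h⟩
    exact ⟨σ, τ, fun i => by have := h i; rw [← this]; push_cast; ring_nf; exact le_refl _⟩
  · rintro ⟨σ, τ, h⟩
    refine ⟨σ, τ, fun i => ?_⟩
    have hle : ∀ i, c (τ i) ≤ a i + b (σ i) := by
      intro i
      have := h i
      have : ((c (τ i) : ℝ)) ≤ (a i : ℝ) + (b (σ i) : ℝ) := by linarith
      exact_mod_cast this
    have hsum2 : ∑ i, (a i + b (σ i) - c (τ i)) = 0 := by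
      have h1 : ∑ i, b (σ i) = ∑ i, b i := Equiv.sum_comp σ b
      have h2 : ∑ i, c (τ i) = ∑ i, c i := Equiv.sum_comp τ c
      simp only [Finset.sum_sub_distrib, Finset.sum_add_distrib, h1, h2]
      omega
    have hz := (Finset.sum_eq_zero_iff_of_nonneg (fun i _ => by
      have := hle i; omega)).mp hsum2 i (Finset.mem_univ i)
    omega
end

section
/- Any three distinct points on the parabola y = Δ² + 3 − (x − iΔ)² with x-coordinates in the interval [iΔ, (i+1)Δ], listed in order of decreasing y-coordinate, form a right-facing y-monotone angle. -/
/-- The cross product determinant `det(u, v)` of two planar vectors. -/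
def cross (u v : ℝ × ℝ) : ℝ := u.1 * v.2 - u.2 * v.1

theorem parabola_triples_right_facing (Δ i : ℝ) (hΔ : 0 < Δ) (hi : 1 ≤ i)
    (x₁ x₂ x₃ : ℝ) (h1 : i * Δ ≤ x₁) (h12 : x₁ < x₂) (h23 : x₂ < x₃)
    (h3 : x₃ ≤ (i + 1) * Δ)
    (f : ℝ → ℝ) (hf : ∀ x, f x = Δ ^ 2 + 3 - (x - i * Δ) ^ 2)
    (p q r : ℝ × ℝ) (hp : p = (x₁, f x₁)) (hq : q = (x₂, f x₂)) (hr : r = (x₃, f x₃)) :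
    -- (p, q, r) is y-monotone (y strictly decreasing) and right-facing
    p.2 > q.2 ∧ q.2 > r.2 ∧ cross (p - r) (q - r) < 0 := by
  subst hp hq hr
  simp only [cross, Prod.fst_sub, Prod.snd_sub, hf]
  refine ⟨?_, ?_, ?_⟩
  · nlinarith [sub_nonneg.mpr h1]
  · nlinarith [sub_nonneg.mpr h1]
  · nlinarith [mul_pos (mul_pos (sub_pos.mpr h12) (sub_pos.mpr h23)) (sub_pos.mpr (h12.trans h23))]
end
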